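/- Let G = (V, E) be a finite simple undirected graph with independence number α₁, and let p : V → [0, 1]. For each v ∈ V define q(v) := 1 − ∏_{w ∈ N(v)} (1 − p(w)), where N(v) is the closed neighborhood of v (with the convention that a summand p(v)/q(v) is 0 when p(v) = 0). Then ∑_{v ∈ V} p(v)/q(v) ≤ (1/(1 − e^{−1})) · ( α₁ + ∑_{v ∈ V} p(v) ). -/
import Mathlib


open Finset

/-- Weighted Caro–Wei: on any finset `s`, the sum of `p v` divided by the weight of the
closed neighborhood of `v` inside `s` is at most the size of some independent subset of `s`. -/
lemma caroWei_aux {V : Type*} [Fintype V] [DecidableEq V] (G : SimpleGraph V)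
    [DecidableRel G.Adj] (p : V → ℝ) (hp : ∀ v, 0 ≤ p v) (s : Finset V) :
    ∃ t ⊆ s, (∀ v ∈ t, ∀ w ∈ t, ¬ G.Adj v w) ∧
      ∑ v ∈ s, p v / (∑ w ∈ (insert v (G.neighborFinset v)) ∩ s, p w) ≤ t.card := by
  induction s using Finset.strongInduction with
  | _ s ih =>
    rcases s.eq_empty_or_nonempty with rfl | hne
    · exact ⟨∅, by simp, by simp, by simp⟩
    obtain ⟨v, hvs, hmin⟩ := s.exists_min_image
      (fun u => ∑ w ∈ (insert u (G.neighborFinset u)) ∩ s, p w) hne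
    set N : Finset V := insert v (G.neighborFinset v) with hN
    set s' : Finset V := s \ N with hs'
    have hvN : v ∈ N := Finset.mem_insert_self _ _
    have hss : s' ⊂ s :=
      (Finset.ssubset_iff_of_subset Finset.sdiff_subset).2 ⟨v, hvs, by simp [hs', hvN]⟩
    obtain ⟨t', ht's, ht'ind, ht'sum⟩ := ih s' hss
    refine ⟨insert v t', ?_, ?_, ?_⟩
    · intro x hx
      rcases Finset.mem_insert.1 hx with rfl | hx
      · exact hvs
      · exact (Finset.sdiff_subset (ht's hx))
    · -- independence
      intro x hx y hy
      have hnot : ∀ u ∈ t', ¬ G.Adj v u := by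
        intro u hu hadj
        have : u ∈ s' := ht's hu
        have : u ∉ N := (Finset.mem_sdiff.1 this).2
        exact this (Finset.mem_insert_of_mem (by simpa using hadj))
      intro hadj
      rcases Finset.mem_insert.1 hx with hxv | hxt
      · rcases Finset.mem_insert.1 hy with hyv | hyt
        · exact G.irrefl (hxv ▸ hyv ▸ hadj)
        · exact hnot y hyt (hxv ▸ hadj)
      · rcases Finset.mem_insert.1 hy with hyv | hyt
        · exact hnot x hxt ((hyv ▸ hadj).symm)
        · exact ht'ind x hxt y hyt hadj
    · -- the sum bound
      have hvnott' : v ∉ t' := by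
        intro h
        have := ht's h
        exact (Finset.mem_sdiff.1 this).2 hvN
      rw [Finset.card_insert_of_notMem hvnott']
      push_cast
      -- split sum
      have hsplit := Finset.sum_sdiff
        (f := fun u => p u / (∑ w ∈ (insert u (G.neighborFinset u)) ∩ s, p w))
        (Finset.sdiff_subset : s' ⊆ s)
      have hsds : s \ s' = s ∩ N := by
        rw [hs', Finset.sdiff_sdiff_self_left]
      set D : ℝ := ∑ w ∈ N ∩ s, p w with hD
      have hDnn : 0 ≤ D := Finset.sum_nonneg fun w _ => hp w
      -- second part ≤ 1
      have h2 : ∑ u ∈ s \ s', p u / (∑ w ∈ (insert u (G.neighborFinset u)) ∩ s, p w) ≤ 1 := by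
        rcases eq_or_lt_of_le hDnn with hD0 | hDpos
        · have hz : ∀ w ∈ N ∩ s, p w = 0 := by
            intro w hw
            have := Finset.sum_eq_zero_iff_of_nonneg (fun w _ => hp w) |>.1 hD0.symm
            exact this w hw
          have : ∀ u ∈ s \ s', p u = 0 := by
            intro u hu
            rw [hsds] at hu
            exact hz u (by rw [Finset.inter_comm]; exact hu)
          rw [Finset.sum_congr rfl (fun u hu => by rw [this u hu, zero_div])]
          simp
        · have hterm : ∀ u ∈ s \ s',
              p u / (∑ w ∈ (insert u (G.neighborFinset u)) ∩ s, p w) ≤ p u / D := by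
            intro u hu
            have hus : u ∈ s := (Finset.mem_sdiff.1 hu).1
            exact div_le_div_of_nonneg_left (hp u) hDpos (hmin u hus)
          calc ∑ u ∈ s \ s', p u / (∑ w ∈ (insert u (G.neighborFinset u)) ∩ s, p w)
              ≤ ∑ u ∈ s \ s', p u / D := Finset.sum_le_sum hterm
            _ = (∑ u ∈ s \ s', p u) / D := by rw [Finset.sum_div]
            _ = D / D := by rw [hsds, hD, Finset.inter_comm]
            _ = 1 := div_self (ne_of_gt hDpos)
      -- first part ≤ sum over s'
      have h1 : ∑ u ∈ s', p u / (∑ w ∈ (insert u (G.neighborFinset u)) ∩ s, p w)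
          ≤ ∑ u ∈ s', p u / (∑ w ∈ (insert u (G.neighborFinset u)) ∩ s', p w) := by
        apply Finset.sum_le_sum
        intro u hu
        rcases eq_or_lt_of_le (hp u) with hpu0 | hpu
        · rw [← hpu0]; simp
        · have hus' : u ∈ s' := hu
          have hQpos : 0 < ∑ w ∈ (insert u (G.neighborFinset u)) ∩ s', p w := by
            apply lt_of_lt_of_le hpu
            apply Finset.single_le_sum (fun w _ => hp w)
            exact Finset.mem_inter.2 ⟨Finset.mem_insert_self _ _, hus'⟩
          apply div_le_div_of_nonneg_left (le_of_lt hpu) hQpos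
          apply Finset.sum_le_sum_of_subset_of_nonneg
          · exact Finset.inter_subset_inter_left Finset.sdiff_subset
          · intro w _ _; exact hp w
      rw [← hsplit]
      linarith [h1, h2, ht'sum]

theorem stmt6 {V : Type*} [Fintype V] [DecidableEq V] (G : SimpleGraph V) [DecidableRel G.Adj]
    (α₁ : ℕ)
    (hα : IsGreatest
      {n : ℕ | ∃ s : Finset V, s.card = n ∧ ∀ v ∈ s, ∀ w ∈ s, ¬ G.Adj v w} α₁)
    (p : V → ℝ) (hp : ∀ v, p v ∈ Set.Icc (0 : ℝ) 1)
    (q : V → ℝ)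
    (hqdef : ∀ v, q v = 1 - ∏ w ∈ insert v (G.neighborFinset v), (1 - p w)) :
    ∑ v, p v / q v ≤ (1 / (1 - Real.exp (-1))) * ((α₁ : ℝ) + ∑ v, p v) := by
  have hp0 : ∀ v, 0 ≤ p v := fun v => (hp v).1
  have hp1 : ∀ v, p v ≤ 1 := fun v => (hp v).2
  set c : ℝ := 1 - Real.exp (-1) with hc
  have hcpos : 0 < c := by
    have : Real.exp (-1) < 1 := Real.exp_lt_one_iff.2 (by norm_num)
    linarith
  set P : V → ℝ := fun v => ∑ w ∈ insert v (G.neighborFinset v), p w with hP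
  -- termwise bound
  have hterm : ∀ v, p v / q v ≤ c⁻¹ * (p v + p v / P v) := by
    intro v
    rcases eq_or_lt_of_le (hp0 v) with hpv0 | hpv
    · rw [← hpv0]
      simp
    · have hPv : p v ≤ P v :=
        Finset.single_le_sum (fun w _ => hp0 w) (Finset.mem_insert_self _ _)
      have hPpos : 0 < P v := lt_of_lt_of_le hpv hPv
      -- product bound
      have hprod : ∏ w ∈ insert v (G.neighborFinset v), (1 - p w) ≤ Real.exp (-P v) := by
        have : ∏ w ∈ insert v (G.neighborFinset v), (1 - p w)
            ≤ ∏ w ∈ insert v (G.neighborFinset v), Real.exp (-(p w)) := by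
          apply Finset.prod_le_prod
          · intro w _; linarith [hp1 w]
          · intro w _
            have := Real.add_one_le_exp (-(p w))
            linarith
        calc ∏ w ∈ insert v (G.neighborFinset v), (1 - p w)
            ≤ ∏ w ∈ insert v (G.neighborFinset v), Real.exp (-(p w)) := this
          _ = Real.exp (∑ w ∈ insert v (G.neighborFinset v), -(p w)) := (Real.exp_sum _ _).symm
          _ = Real.exp (-P v) := by rw [Finset.sum_neg_distrib]
      have hqge : c * min 1 (P v) ≤ q v := by
        rw [hqdef v]
        rcases le_total 1 (P v) with h1P | hP1
        · rw [min_eq_left h1P]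
          have : Real.exp (-P v) ≤ Real.exp (-1) :=
            Real.exp_le_exp.2 (by linarith)
          rw [hc]; linarith
        · rw [min_eq_right hP1]
          have hconv := convexOn_exp.2 (Set.mem_univ (0 : ℝ)) (Set.mem_univ (-1 : ℝ))
            (by linarith : (0:ℝ) ≤ 1 - P v) (le_of_lt hPpos) (by ring)
          simp only [smul_eq_mul, mul_zero, Real.exp_zero, mul_neg, mul_one, zero_add] at hconv
          have : Real.exp (-P v) ≤ (1 - P v) + P v * Real.exp (-1) := by linarith [hconv]
          rw [hc]
          nlinarith [hprod]
      have hminpos : 0 < min 1 (P v) := lt_min one_pos hPpos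
      have hqpos : 0 < q v := lt_of_lt_of_le (by positivity) hqge
      have step1 : p v / q v ≤ p v / (c * min 1 (P v)) :=
        div_le_div_of_nonneg_left (hp0 v) (by positivity) hqge
      have step2 : p v / (c * min 1 (P v)) ≤ c⁻¹ * (p v + p v / P v) := by
        have hm : p v / min 1 (P v) ≤ p v + p v / P v := by
          rcases le_total (P v) 1 with h | h
          · rw [min_eq_right h]
            have : 0 ≤ p v := hp0 v
            linarith
          · rw [min_eq_left h, div_one]
            have : 0 ≤ p v / P v := by positivity
            linarith
        rw [div_mul_eq_div_div_swap, div_eq_inv_mul]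
        exact mul_le_mul_of_nonneg_left hm (by positivity)
      exact le_trans step1 step2
  -- Caro-Wei bound
  have hCW : ∑ v, p v / P v ≤ (α₁ : ℝ) := by
    obtain ⟨t, hts, htind, htsum⟩ := caroWei_aux G p hp0 Finset.univ
    have hcard : t.card ≤ α₁ := hα.2 ⟨t, rfl, htind⟩
    calc ∑ v, p v / P v
        = ∑ v ∈ Finset.univ, p v / (∑ w ∈ (insert v (G.neighborFinset v)) ∩ Finset.univ, p w) := by
          apply Finset.sum_congr rfl
          intro v _
          rw [Finset.inter_univ]
      _ ≤ (t.card : ℝ) := htsum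
      _ ≤ (α₁ : ℝ) := by exact_mod_cast hcard
  calc ∑ v, p v / q v ≤ ∑ v, c⁻¹ * (p v + p v / P v) := Finset.sum_le_sum fun v _ => hterm v
    _ = c⁻¹ * (∑ v, p v + ∑ v, p v / P v) := by
        rw [← Finset.mul_sum, Finset.sum_add_distrib]
    _ ≤ c⁻¹ * (∑ v, p v + (α₁ : ℝ)) := by
        apply mul_le_mul_of_nonneg_left _ (by positivity)
        linarith
    _ = (1 / c) * ((α₁ : ℝ) + ∑ v, p v) := by rw [one_div]; ring
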